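/- Let q be a self-join-free Boolean conjunctive query containing distinct atoms F, G with F attacks G, G attacks F, and the attack F → G strong (i.e., FD(q) ⊭ key(F) → key(G)). Define F* = {x : FD(q) ⊨ key(F) → x} and for constants a, b, c define a valuation τ_{a,b,c}: τ(u) = ⊥ if u ∈ F⁺ ∩ G⁺; τ(u) = a if u ∈ F⁺ \ G⁺; τ(u) = (b,c) if u ∈ G⁺ \ F*; τ(u) = b if u ∈ (G⁺ ∩ F*) \ F⁺; τ(u) = (a,b) if u ∈ F* \ (F⁺ ∪ G⁺); τ(u) = (a,b,c) if u ∉ F* ∪ G⁺. Then: (1) τ_{a,b,c}(F) and τ_{a',b',c'}(F) are key-equal iff a = a'; (2) τ_{a,b,c}(F) = τ_{a',b',c'}(F) iff a = a' and b = b'; (3) τ_{a,b,c}(G) and τ_{a',b',c'}(G) are key-equal iff b = b' and c = c'; (4) τ_{a,b,c}(G) = τ_{a',b',c'}(G) iff a = a', b = b', and c = c'. -/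

import Mathlib

/-- Constants: base constants, a special constant `⊥`, and injective pairing/tripling. -/
inductive C where
  | base : ℕ → C
  | bot : C
  | pair : C → C → C
  | triple : C → C → C → C
deriving DecidableEq

/-- A fact: relation name, primary-key values, non-key values. -/
structure DBFact where
  rel : ℕ
  key : List C
  rest : List C
deriving DecidableEq

/-- Two facts are key-equal if they have the same relation name and primary-key value. -/
def keyEq (A B : DBFact) : Prop := A.rel = B.rel ∧ A.key = B.key

/-- A term is a variable (inl) or a constant (inr). -/
abbrev Term := ℕ ⊕ C

/-- An atom with key positions and non-key positions. -/
structure Atom where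
  rel : ℕ
  key : List Term
  rest : List Term
deriving DecidableEq

def termVars (l : List Term) : Finset ℕ := (l.filterMap fun t => t.getLeft?).toFinset

/-- Variables at primary-key positions of an atom. -/
def keyVars (F : Atom) : Finset ℕ := termVars F.key

/-- All variables of an atom. -/
def atomVars (F : Atom) : Finset ℕ := termVars F.key ∪ termVars F.rest

/-- A query is self-join-free: no relation name occurs twice. -/
def SJF (q : Finset Atom) : Prop := ∀ F ∈ q, ∀ G ∈ q, F.rel = G.rel → F = G

/-- Apply a valuation to an atom, yielding a fact. -/
def applyVal (θ : ℕ → C) (F : Atom) : DBFact :=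
  ⟨F.rel, F.key.map (Sum.elim θ id), F.rest.map (Sum.elim θ id)⟩

/-- Semantic implication of a functional dependency `X → Y` by a set of FDs
(two-tuple semantics). -/
def FDImplies (fds : Set (Set ℕ × Set ℕ)) (X Y : Set ℕ) : Prop :=
  ∀ θ μ : ℕ → C,
    (∀ p ∈ fds, (∀ v ∈ p.1, θ v = μ v) → ∀ v ∈ p.2, θ v = μ v) →
    (∀ v ∈ X, θ v = μ v) → ∀ v ∈ Y, θ v = μ v

/-- `FD(q) = { key(F) → vars(F) : F ∈ q }`. -/
def FDs (q : Finset Atom) : Set (Set ℕ × Set ℕ) :=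
  {p | ∃ F ∈ q, p = ((keyVars F : Set ℕ), (atomVars F : Set ℕ))}

/-- `F⁺ = { x : FD(q \ {F}) ⊨ key(F) → x }`. -/
def plus (q : Finset Atom) (F : Atom) : Set ℕ :=
  {x | FDImplies (FDs (q.erase F)) (keyVars F : Set ℕ) {x}}

/-- One step of a witness for an attack by `F`. -/
def AttackStep (q : Finset Atom) (F : Atom) (A B : Atom) : Prop :=
  ¬ ((atomVars A ∩ atomVars B : Finset ℕ) : Set ℕ) ⊆ plus q F

/-- `F` attacks `G` in the attack graph of `q`. -/
def Attacks (q : Finset Atom) (F G : Atom) : Prop :=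
  F ≠ G ∧ F ∈ q ∧ ∃ L : List Atom, (∀ A ∈ L, A ∈ q) ∧
    List.Chain (AttackStep q F) F L ∧ (F :: L).getLast (List.cons_ne_nil F L) = G

/-- `F* = { x : FD(q) ⊨ key(F) → x }`. -/
def star (q : Finset Atom) (F : Atom) : Set ℕ :=
  {x | FDImplies (FDs q) (keyVars F : Set ℕ) {x}}

open Classical in
/-- The valuation `τ_{a,b,c}`: `⊥` on `F⁺ ∩ G⁺`, `a` on `F⁺ \ G⁺`, `(b,c)` on
`G⁺ \ F*`, `b` on `(G⁺ ∩ F*) \ F⁺`, `(a,b)` on `F* \ (F⁺ ∪ G⁺)`, and `(a,b,c)`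
outside `F* ∪ G⁺`. -/
noncomputable def tval (q : Finset Atom) (F G : Atom) (a b c : ℕ) (u : ℕ) : C :=
  if u ∈ plus q F ∩ plus q G then C.bot
  else if u ∈ plus q F then C.base a
  else if u ∈ plus q G ∧ u ∉ star q F then C.pair (C.base b) (C.base c)
  else if u ∈ plus q G then C.base b
  else if u ∈ star q F then C.pair (C.base a) (C.base b)
  else C.triple (C.base a) (C.base b) (C.base c)


section Aux
variable {q : Finset Atom} {F G : Atom}

lemma mem_termVars {l : List Term} {u : ℕ} : u ∈ termVars l ↔ Sum.inl u ∈ l := by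
  simp [termVars, List.mem_filterMap, Sum.getLeft?_eq_some_iff]

lemma mem_keyVars {u : ℕ} : u ∈ keyVars F ↔ Sum.inl u ∈ F.key := mem_termVars

lemma mem_atomVars {u : ℕ} : u ∈ atomVars F ↔ Sum.inl u ∈ F.key ∨ Sum.inl u ∈ F.rest := by
  simp [atomVars, Finset.mem_union, mem_termVars]

lemma key_subset_plus {u : ℕ} (hu : u ∈ keyVars F) : u ∈ plus q F := by
  intro θ μ _ hX v hv
  rw [Set.mem_singleton_iff] at hv
  rw [hv]
  exact hX u hu

lemma key_subset_star {u : ℕ} (hu : u ∈ keyVars F) : u ∈ star q F := by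
  intro θ μ _ hX v hv
  rw [Set.mem_singleton_iff] at hv
  rw [hv]
  exact hX u hu

lemma FDs_mono {q₁ q₂ : Finset Atom} (h : q₁ ⊆ q₂) : FDs q₁ ⊆ FDs q₂ := by
  rintro p ⟨A, hA, hp⟩
  exact ⟨A, h hA, hp⟩

lemma plus_subset_star {u : ℕ} (hu : u ∈ plus q F) : u ∈ star q F := by
  intro θ μ hfds hX
  exact hu θ μ (fun p hp => hfds p (FDs_mono (Finset.erase_subset F q) hp)) hX

/-- closure of `plus q G` under the FD of an atom `F ∈ q \ {G}`. -/
lemma plus_closed (hF : F ∈ q.erase G)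
    (hkey : ∀ x ∈ keyVars F, x ∈ plus q G) :
    ∀ y ∈ atomVars F, y ∈ plus q G := by
  intro y hy θ μ hfds hX v hv
  rw [Set.mem_singleton_iff] at hv
  rw [hv]
  have hx : ∀ x ∈ (keyVars F : Set ℕ), θ x = μ x := by
    intro x hx
    exact hkey x hx θ μ hfds hX x rfl
  exact hfds (_, _) ⟨F, hF, rfl⟩ hx y (by exact_mod_cast hy)

/-- closure of `star q F` under the FD of an atom `A ∈ q`. -/
lemma star_closed {A : Atom} (hA : A ∈ q)
    (hkey : ∀ x ∈ keyVars A, x ∈ star q F) :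
    ∀ y ∈ atomVars A, y ∈ star q F := by
  intro y hy θ μ hfds hX v hv
  rw [Set.mem_singleton_iff] at hv
  rw [hv]
  have hx : ∀ x ∈ (keyVars A : Set ℕ), θ x = μ x := by
    intro x hx
    exact hkey x hx θ μ hfds hX x rfl
  exact hfds (_, _) ⟨A, hA, rfl⟩ hx y (by exact_mod_cast hy)

lemma vars_subset_star (hF : F ∈ q) : ∀ y ∈ atomVars F, y ∈ star q F :=
  star_closed hF (fun _ hx => key_subset_star hx)

/-- a chain into a last element gives a step into it. -/
lemma chain_last_step {α : Type*} {R : α → α → Prop} :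
    ∀ (x : α) (L : List α) (h : L ≠ []), List.Chain R x L →
      ∃ A, R A (L.getLast h) := by
  intro x L
  induction L generalizing x with
  | nil => intro h; exact absurd rfl h
  | cons y L' ih =>
    intro _ hch
    replace hch : R x y ∧ List.Chain R y L' := List.isChain_cons_cons.mp hch
    cases L' with
    | nil => exact ⟨x, hch.1⟩
    | cons z L'' =>
      obtain ⟨A, hA⟩ := ih y (by simp) hch.2
      exact ⟨A, by rwa [List.getLast_cons (by simp)]⟩

/-- From an attack, some variable of the attacker avoids its plus. -/
lemma attacker_not_plus (h : Attacks q F G) :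
    ∃ u ∈ atomVars F, u ∉ plus q F := by
  obtain ⟨hne, _, L, _, hch, hlast⟩ := h
  cases L with
  | nil => exact absurd hlast hne
  | cons A L' =>
    replace hch : AttackStep q F F A ∧ List.Chain (AttackStep q F) A L' :=
      List.isChain_cons_cons.mp hch
    obtain ⟨u, hu, hnu⟩ := Set.not_subset.mp hch.1
    rw [Finset.mem_coe, Finset.mem_inter] at hu
    exact ⟨u, hu.1, hnu⟩

/-- From an attack, some variable of the attacked atom avoids the attacker's plus. -/
lemma attacked_not_plus (h : Attacks q F G) :
    ∃ u ∈ atomVars G, u ∉ plus q F := by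
  obtain ⟨hne, _, L, _, hch, hlast⟩ := h
  cases L with
  | nil => exact absurd hlast hne
  | cons A L' =>
    obtain ⟨B, hB⟩ := chain_last_step F (A :: L') (by simp) hch
    rw [List.getLast_cons (by simp)] at hlast
    rw [hlast] at hB
    obtain ⟨u, hu, hnu⟩ := Set.not_subset.mp hB
    rw [Finset.mem_coe, Finset.mem_inter] at hu
    exact ⟨u, hu.2, hnu⟩

/-- key(F) is not contained in G⁺ when G attacks F. -/
lemma key_not_subset_plus (hFq : F ∈ q) (h : Attacks q G F) :
    ∃ u ∈ keyVars F, u ∉ plus q G := by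
  by_contra hc
  push_neg at hc
  obtain ⟨u, hu, hnu⟩ := attacked_not_plus h
  exact hnu (plus_closed (Finset.mem_erase.mpr ⟨h.1.symm ∘ Eq.symm ∘ Eq.symm, hFq⟩)
    hc u hu)

section Tval
variable {a b c u : ℕ}

lemma tval_bot (h1 : u ∈ plus q F) (h2 : u ∈ plus q G) :
    tval q F G a b c u = C.bot := by
  simp [tval, Set.mem_inter_iff, h1, h2]

lemma tval_a (h1 : u ∈ plus q F) (h2 : u ∉ plus q G) :
    tval q F G a b c u = C.base a := by
  simp [tval, Set.mem_inter_iff, h1, h2]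

lemma tval_bc (h1 : u ∉ plus q F) (h2 : u ∈ plus q G) (h3 : u ∉ star q F) :
    tval q F G a b c u = C.pair (C.base b) (C.base c) := by
  simp [tval, Set.mem_inter_iff, h1, h2, h3]

lemma tval_b (h1 : u ∉ plus q F) (h2 : u ∈ plus q G) (h3 : u ∈ star q F) :
    tval q F G a b c u = C.base b := by
  simp [tval, Set.mem_inter_iff, h1, h2, h3]

lemma tval_ab (h1 : u ∉ plus q F) (h2 : u ∉ plus q G) (h3 : u ∈ star q F) :
    tval q F G a b c u = C.pair (C.base a) (C.base b) := by
  simp [tval, Set.mem_inter_iff, h1, h2, h3]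

lemma tval_abc (h1 : u ∉ plus q F) (h2 : u ∉ plus q G) (h3 : u ∉ star q F) :
    tval q F G a b c u = C.triple (C.base a) (C.base b) (C.base c) := by
  simp [tval, Set.mem_inter_iff, h1, h2, h3]

end Tval
end Aux

/-- Key-equality and equality of the `τ`-images of `F` and `G`, when `F` and `G`
attack each other and the attack `F → G` is strong. -/
theorem tval_key_equalities (q : Finset Atom) (hq : SJF q) (F G : Atom)
    (hFG : F ≠ G) (h1 : Attacks q F G) (h2 : Attacks q G F)
    (hstrong : ¬ FDImplies (FDs q) (keyVars F : Set ℕ) (keyVars G : Set ℕ)) :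
    ∀ a b c a' b' c' : ℕ,
      (keyEq (applyVal (tval q F G a b c) F) (applyVal (tval q F G a' b' c') F) ↔
        a = a') ∧
      (applyVal (tval q F G a b c) F = applyVal (tval q F G a' b' c') F ↔
        a = a' ∧ b = b') ∧
      (keyEq (applyVal (tval q F G a b c) G) (applyVal (tval q F G a' b' c') G) ↔
        b = b' ∧ c = c') ∧
      (applyVal (tval q F G a b c) G = applyVal (tval q F G a' b' c') G ↔
        a = a' ∧ b = b' ∧ c = c') := by
  -- witnesses
  have hFq : F ∈ q := h1.2.1
  have hGq : G ∈ q := h2.2.1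
  obtain ⟨w1, hw1k, hw1G⟩ := key_not_subset_plus hFq h2
  have hw1F : w1 ∈ plus q F := key_subset_plus hw1k
  obtain ⟨w2, hw2v, hw2F⟩ := attacker_not_plus h1
  have hw2s : w2 ∈ star q F := vars_subset_star hFq w2 hw2v
  have hw3 : ∃ u ∈ keyVars G, u ∉ star q F := by
    by_contra hc
    push_neg at hc
    exact hstrong (fun θ μ hfds hX v hv => hc v hv θ μ hfds hX v rfl)
  obtain ⟨w3, hw3k, hw3s⟩ := hw3
  have hw3F : w3 ∉ plus q F := fun h => hw3s (plus_subset_star h)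
  have hw3G : w3 ∈ plus q G := key_subset_plus hw3k
  obtain ⟨w4, hw4v, hw4G⟩ := attacker_not_plus h2
  intro a b c a' b' c'
  set τ := tval q F G a b c with hτ
  set τ' := tval q F G a' b' c' with hτ'
  -- per-variable agreement lemmas
  have agreeF : ∀ t ∈ F.key, a = a' → Sum.elim τ id t = Sum.elim τ' id t := by
    rintro (u | v) ht ha
    · subst ha
      have hu : u ∈ plus q F := key_subset_plus (mem_keyVars.mpr ht)
      by_cases hg : u ∈ plus q G
      · simp [hτ, hτ', tval_bot hu hg]
      · simp [hτ, hτ', tval_a hu hg]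
    · rfl
  have agreeFall : ∀ u, u ∈ atomVars F → a = a' → b = b' → τ u = τ' u := by
    intro u hu ha hb
    subst ha; subst hb
    have hus : u ∈ star q F := vars_subset_star hFq u hu
    by_cases hf : u ∈ plus q F
    · by_cases hg : u ∈ plus q G
      · rw [hτ, hτ', tval_bot hf hg, tval_bot hf hg]
      · rw [hτ, hτ', tval_a hf hg, tval_a hf hg]
    · by_cases hg : u ∈ plus q G
      · rw [hτ, hτ', tval_b hf hg hus, tval_b hf hg hus]
      · rw [hτ, hτ', tval_ab hf hg hus, tval_ab hf hg hus]
  have agreeG : ∀ t ∈ G.key, b = b' → c = c' → Sum.elim τ id t = Sum.elim τ' id t := by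
    rintro (u | v) ht hb hc
    · subst hb; subst hc
      have hg : u ∈ plus q G := key_subset_plus (mem_keyVars.mpr ht)
      by_cases hf : u ∈ plus q F
      · simp [hτ, hτ', tval_bot hf hg]
      · by_cases hs : u ∈ star q F
        · simp [hτ, hτ', tval_b hf hg hs]
        · simp [hτ, hτ', tval_bc hf hg hs]
    · rfl
  -- the four equivalences
  have eq1 : keyEq (applyVal τ F) (applyVal τ' F) ↔ a = a' := by
    constructor
    · rintro ⟨-, hkeys⟩
      have := List.map_inj_left.mp hkeys (Sum.inl w1) (mem_keyVars.mp hw1k)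
      rw [Sum.elim_inl, Sum.elim_inl, hτ, hτ', tval_a hw1F hw1G, tval_a hw1F hw1G] at this
      exact C.base.inj this
    · intro ha
      exact ⟨rfl, List.map_inj_left.mpr (fun t ht => agreeF t ht ha)⟩
  have eq3 : keyEq (applyVal τ G) (applyVal τ' G) ↔ b = b' ∧ c = c' := by
    constructor
    · rintro ⟨-, hkeys⟩
      have := List.map_inj_left.mp hkeys (Sum.inl w3) (mem_keyVars.mp hw3k)
      rw [Sum.elim_inl, Sum.elim_inl, hτ, hτ', tval_bc hw3F hw3G hw3s,
        tval_bc hw3F hw3G hw3s] at this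
      obtain ⟨h1, h2⟩ := C.pair.inj this
      exact ⟨C.base.inj h1, C.base.inj h2⟩
    · rintro ⟨hb, hc⟩
      exact ⟨rfl, List.map_inj_left.mpr (fun t ht => agreeG t ht hb hc)⟩
  refine ⟨eq1, ?_, eq3, ?_⟩
  · constructor
    · intro h
      have hk : (applyVal τ F).key = (applyVal τ' F).key := by rw [h]
      have hr : (applyVal τ F).rest = (applyVal τ' F).rest := by rw [h]
      have ha : a = a' := eq1.mp ⟨rfl, hk⟩
      refine ⟨ha, ?_⟩
      -- use witness w2 ∈ atomVars F \ plus F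
      have hval : τ w2 = τ' w2 := by
        rcases mem_atomVars.mp hw2v with hm | hm
        · have := List.map_inj_left.mp hk (Sum.inl w2) hm
          simpa using this
        · have := List.map_inj_left.mp hr (Sum.inl w2) hm
          simpa using this
      by_cases hg : w2 ∈ plus q G
      · rw [hτ, hτ', tval_b hw2F hg hw2s, tval_b hw2F hg hw2s] at hval
        exact C.base.inj hval
      · rw [hτ, hτ', tval_ab hw2F hg hw2s, tval_ab hw2F hg hw2s] at hval
        exact C.base.inj (C.pair.inj hval).2
    · rintro ⟨ha, hb⟩
      have hkey : F.key.map (Sum.elim τ id) = F.key.map (Sum.elim τ' id) := by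
        refine List.map_inj_left.mpr ?_
        rintro (u | v) ht
        · simpa using agreeFall u (mem_atomVars.mpr (Or.inl ht)) ha hb
        · rfl
      have hrest : F.rest.map (Sum.elim τ id) = F.rest.map (Sum.elim τ' id) := by
        refine List.map_inj_left.mpr ?_
        rintro (u | v) ht
        · simpa using agreeFall u (mem_atomVars.mpr (Or.inr ht)) ha hb
        · rfl
      simp [applyVal, hkey, hrest]
  · constructor
    · intro h
      have hk : (applyVal τ G).key = (applyVal τ' G).key := by rw [h]
      have hr : (applyVal τ G).rest = (applyVal τ' G).rest := by rw [h]
      obtain ⟨hb, hc⟩ := eq3.mp ⟨rfl, hk⟩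
      refine ⟨?_, hb, hc⟩
      have hval : τ w4 = τ' w4 := by
        rcases mem_atomVars.mp hw4v with hm | hm
        · have := List.map_inj_left.mp hk (Sum.inl w4) hm
          simpa using this
        · have := List.map_inj_left.mp hr (Sum.inl w4) hm
          simpa using this
      by_cases hf : w4 ∈ plus q F
      · rw [hτ, hτ', tval_a hf hw4G, tval_a hf hw4G] at hval
        exact C.base.inj hval
      · by_cases hs : w4 ∈ star q F
        · rw [hτ, hτ', tval_ab hf hw4G hs, tval_ab hf hw4G hs] at hval
          exact C.base.inj (C.pair.inj hval).1
        · rw [hτ, hτ', tval_abc hf hw4G hs, tval_abc hf hw4G hs] at hval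
          exact C.base.inj (C.triple.inj hval).1
    · rintro ⟨ha, hb, hc⟩
      subst ha; subst hb; subst hc
      rfl
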